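/- Let p be a prime and M a free ℤ_p-module of rank d, and let f : M → M be a ℤ_p-linear endomorphism such that f^{p^n} ≡ id (mod p·End(M)) for some n ≥ 0. Then for every integer t ≥ 0 with d ≥ p^{t−1}(p−1), and for every integer i ≥ 1, the endomorphism (id − f^{p^t})^i maps M into p^{⌈(p^t/d)·i − 1⌉} M (i.e., v_p((id − f^{p^t})^i) ≥ (p^t/d)·i − 1). -/

import Mathlib

open Module

private lemma key1 (p d t : ℕ) (hp2 : 2 ≤ p) (hdt : ∀ j, j < t → p ^ j * (p - 1) ≤ d) :
    ∀ j, j ≤ t → p ^ t ≤ d * j + p ^ (t - j) := by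
  intro j
  induction j with
  | zero => intro _; simp
  | succ j ih =>
    intro hj
    have h1 := ih (by omega)
    have e1 : p ^ (t - j) = p ^ (t - (j + 1)) * p := by
      rw [← pow_succ]; congr 1; omega
    have e2 : p ^ (t - (j + 1)) * p = p ^ (t - (j + 1)) * 1 + p ^ (t - (j + 1)) * (p - 1) := by
      rw [← Nat.mul_add]; congr 1; omega
    have h3 := hdt (t - (j + 1)) (by omega)
    have e3 : d * (j + 1) = d * j + d := by ring
    omega

private lemma key2 (p : ℕ) [hp : Fact p.Prime] (t k : ℕ) (hk1 : 1 ≤ k) (hk2 : k ≤ p ^ t) :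
    padicValNat p k ≤ t ∧ p ^ (t - padicValNat p k) ∣ (p ^ t).choose k := by
  have hp2 : 2 ≤ p := hp.out.two_le
  set v := padicValNat p k with hv
  have hpv : p ^ v ∣ k := pow_padicValNat_dvd
  have hvle : v ≤ t := by
    by_contra h
    have : p ^ (t + 1) ≤ p ^ v := Nat.pow_le_pow_right (by omega) (by omega)
    have : p ^ v ≤ k := Nat.le_of_dvd (by omega) hpv
    have : p ^ t < p ^ (t + 1) := Nat.pow_lt_pow_right (by omega) (by omega)
    omega
  refine ⟨hvle, ?_⟩
  have hC : 0 < (p ^ t).choose k := Nat.choose_pos hk2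
  have hpt : 1 ≤ p ^ t := Nat.one_le_pow _ _ (by omega)
  -- identity : p^t * choose (p^t - 1) (k-1) = choose (p^t) k * k
  have hid : p ^ t * (p ^ t - 1).choose (k - 1) = (p ^ t).choose k * k := by
    have h0 := Nat.add_one_mul_choose_eq (p ^ t - 1) (k - 1)
    have e1 : (p ^ t - 1).succ = p ^ t := by omega
    have e2 : (k - 1).succ = k := by omega
    simp only [Nat.succ_eq_add_one] at e1 e2
    simp only [e1, e2] at h0
    exact h0
  have hC' : 0 < (p ^ t - 1).choose (k - 1) := by
    apply Nat.choose_pos; omega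
  have hval : t ≤ padicValNat p ((p ^ t).choose k * k) := by
    rw [← hid, padicValNat.mul (by positivity) (by omega)]
    simp [padicValNat.prime_pow]
  rw [padicValNat.mul (by omega) (by omega)] at hval
  rw [padicValNat_dvd_iff_le (by omega)]
  omega

theorem stmt16 (p : ℕ) [Fact p.Prime] {M : Type*} [AddCommGroup M] [Module ℤ_[p] M]
    [Module.Free ℤ_[p] M] [Module.Finite ℤ_[p] M] (d : ℕ)
    (hd : Module.finrank ℤ_[p] M = d)
    (f : M →ₗ[ℤ_[p]] M) (n : ℕ)
    (hf : ∀ x : M, ∃ y : M, (f ^ p ^ n) x - x = (p : ℤ_[p]) • y)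
    (t : ℕ) (ht : (p : ℚ) ^ ((t : ℤ) - 1) * ((p : ℚ) - 1) ≤ (d : ℚ))
    (i : ℕ) (hi : 1 ≤ i) :
    ∀ x : M, ∃ y : M,
      ((1 - f ^ p ^ t) ^ i) x =
        ((p : ℤ_[p]) ^ (⌈((p : ℚ) ^ t / (d : ℚ)) * (i : ℚ) - 1⌉.toNat)) • y := by
  intro x
  have hp2 : 2 ≤ p := (Fact.out : p.Prime).two_le
  rcases Nat.eq_zero_or_pos d with hd0 | hdpos
  · -- d = 0 : M is trivial
    subst hd0
    let b : Basis (Fin 0) ℤ_[p] M := Module.finBasisOfFinrankEq ℤ_[p] M hd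
    haveI : Subsingleton M := by
      haveI : Unique (Fin 0 →₀ ℤ_[p]) := Finsupp.uniqueOfLeft
      exact b.repr.toEquiv.subsingleton
    exact ⟨0, Subsingleton.elim _ _⟩
  · let b : Basis (Fin d) ℤ_[p] M := Module.finBasisOfFinrankEq ℤ_[p] M hd
    set a : Module.End ℤ_[p] M := f - 1 with ha
    -- Step 1 : a ^ d = p • g₀
    obtain ⟨g₀, hg₀⟩ : ∃ g₀ : Module.End ℤ_[p] M, a ^ d = (p : ℤ_[p]) • g₀ := by
      haveI : Nonempty (Fin d) := ⟨⟨0, hdpos⟩⟩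
      let E := LinearMap.toMatrixAlgEquiv b
      let φ : ℤ_[p] →+* ZMod p := PadicInt.toZMod
      set F : Matrix (Fin d) (Fin d) ℤ_[p] := E f with hF
      have hF1 : φ.mapMatrix (F ^ p ^ n - 1) = 0 := by
        have : F ^ p ^ n - 1 = E (f ^ p ^ n - 1) := by simp [hF, map_pow]
        rw [this]
        ext u v
        rw [RingHom.mapMatrix_apply, Matrix.map_apply, LinearMap.toMatrixAlgEquiv_apply]
        obtain ⟨y, hy⟩ := hf (b v)
        have : (f ^ p ^ n - 1) (b v) = (p : ℤ_[p]) • y := by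
          simpa [LinearMap.sub_apply] using hy
        rw [this, map_smul]
        simp [φ]
      have hFpow : (φ.mapMatrix F) ^ p ^ n = 1 := by
        have := hF1
        rw [map_sub, map_pow, map_one, sub_eq_zero] at this
        exact this
      have hnil : IsNilpotent (φ.mapMatrix F - 1) := by
        refine ⟨p ^ n, ?_⟩
        rw [sub_pow_char_pow_of_commute (R := Matrix (Fin d) (Fin d) (ZMod p)) (p := p)
          (n := n) (Commute.one_right (φ.mapMatrix F)), hFpow, one_pow, sub_self]
      have hcp : (φ.mapMatrix F - 1).charpoly = Polynomial.X ^ Fintype.card (Fin d) := by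
        rw [← sub_eq_zero]
        exact IsNilpotent.eq_zero (Matrix.isNilpotent_charpoly_sub_pow_of_isNilpotent hnil)
      have hAd : (φ.mapMatrix F - 1) ^ d = 0 := by
        have := Matrix.aeval_self_charpoly (φ.mapMatrix F - 1)
        rw [hcp] at this
        simpa [Fintype.card_fin] using this
      have hdvd : ∀ u v, (p : ℤ_[p]) ∣ ((F - 1) ^ d) u v := by
        intro u v
        have : φ.mapMatrix ((F - 1) ^ d) = 0 := by
          rw [map_pow, map_sub, map_one, hAd]
        have h0 : φ (((F - 1) ^ d) u v) = 0 := by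
          have h1 := congrFun (congrFun this u) v
          simpa [RingHom.mapMatrix_apply, Matrix.map_apply] using h1
        have hker : ((F - 1) ^ d) u v ∈ RingHom.ker φ := h0
        rw [PadicInt.ker_toZMod, PadicInt.maximalIdeal_eq_span_p,
          Ideal.mem_span_singleton] at hker
        exact hker
      choose G hG using fun u => fun v => (hdvd u v)
      refine ⟨E.symm (Matrix.of G), ?_⟩
      have hEad : E (a ^ d) = (F - 1) ^ d := by simp [ha, map_pow, hF]
      have hmat : (F - 1) ^ d = (p : ℤ_[p]) • Matrix.of G := by
        ext u v
        simpa [Matrix.smul_apply, smul_eq_mul] using hG u v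
      calc a ^ d = E.symm (E (a ^ d)) := by rw [AlgEquiv.symm_apply_apply]
        _ = E.symm ((p : ℤ_[p]) • Matrix.of G) := by rw [hEad, hmat]
        _ = (p : ℤ_[p]) • E.symm (Matrix.of G) := by
            rw [map_smul]
    -- Step 2 : span machinery
    set S : ℕ → Submodule ℤ_[p] (Module.End ℤ_[p] M) := fun r =>
      Submodule.span ℤ_[p]
        {g | ∃ c k : ℕ, r ≤ d * c + k ∧ g = (p : ℤ_[p]) ^ c • a ^ k} with hS
    have hmul : ∀ (r s : ℕ) (g : Module.End ℤ_[p] M), g ∈ S r →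
        ∀ h ∈ S s, g * h ∈ S (r + s) := by
      intro r s g hg
      induction hg using Submodule.span_induction with
      | mem g hgmem =>
        intro h hh
        induction hh using Submodule.span_induction with
        | mem h hhmem =>
          obtain ⟨c1, k1, hck1, rfl⟩ := hgmem
          obtain ⟨c2, k2, hck2, rfl⟩ := hhmem
          apply Submodule.subset_span
          refine ⟨c1 + c2, k1 + k2, by nlinarith, ?_⟩
          rw [smul_mul_smul_comm, ← pow_add, ← pow_add]
        | zero => rw [mul_zero]; exact Submodule.zero_mem _
        | add h1 h2 hh1 hh2 ih1 ih2 =>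
          rw [mul_add]; exact Submodule.add_mem _ ih1 ih2
        | smul c h1 hh1 ih =>
          rw [mul_smul_comm]; exact Submodule.smul_mem _ _ ih
      | zero => intro h hh; rw [zero_mul]; exact Submodule.zero_mem _
      | add g1 g2 hg1 hg2 ih1 ih2 =>
        intro h hh
        rw [add_mul]; exact Submodule.add_mem _ (ih1 h hh) (ih2 h hh)
      | smul c g1 hg1 ih =>
        intro h hh
        rw [smul_mul_assoc]; exact Submodule.smul_mem _ _ (ih h hh)
    have hb : (1 - f ^ p ^ t : Module.End ℤ_[p] M) ∈ S (p ^ t) := by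
      have hfa : f = a + 1 := by rw [ha]; abel
      have hexp : (f : Module.End ℤ_[p] M) ^ p ^ t =
          ∑ k ∈ Finset.range (p ^ t + 1), a ^ k * (((p ^ t).choose k : ℕ) : ℤ_[p]) • 1 := by
        rw [hfa, Commute.add_pow (Commute.one_right a)]
        congr 1
        ext k
        simp [mul_comm, Algebra.smul_def]
      have hsum : (1 - f ^ p ^ t : Module.End ℤ_[p] M) =
          - ∑ k ∈ Finset.range (p ^ t),
            (((p ^ t).choose (k + 1) : ℕ) : ℤ_[p]) • a ^ (k + 1) := by
        rw [hexp, Finset.sum_range_succ']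
        simp [Algebra.smul_def, mul_comm]
        exact Finset.sum_congr rfl fun k _ => ((Nat.cast_commute ((p ^ t).choose (k + 1))
          (a ^ (k + 1))).eq).symm
      rw [hsum]
      apply Submodule.neg_mem
      apply Submodule.sum_mem
      intro k hk
      rw [Finset.mem_range] at hk
      -- valuation of binomial coefficient
      have hk1 : 1 ≤ k + 1 := by omega
      have hk2 : k + 1 ≤ p ^ t := by omega
      obtain ⟨hvle, hdvd⟩ := key2 p t (k + 1) hk1 hk2
      set v := padicValNat p (k + 1) with hv
      obtain ⟨z, hz⟩ := hdvd
      have hzZ : (((p ^ t).choose (k + 1) : ℕ) : ℤ_[p]) =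
          (z : ℤ_[p]) * (p : ℤ_[p]) ^ (t - v) := by
        rw [hz]; push_cast; ring
      rw [hzZ, mul_smul]
      apply Submodule.smul_mem
      apply Submodule.subset_span
      refine ⟨t - v, k + 1, ?_, rfl⟩
      -- numeric : p ^ t ≤ d * (t - v) + (k + 1)
      have hdt : ∀ j, j < t → p ^ j * (p - 1) ≤ d := by
        intro j hj
        have ht' : (p : ℚ) ^ ((t : ℤ) - 1) * ((p : ℚ) - 1) ≤ (d : ℚ) := ht
        have hte : (t : ℤ) - 1 = ((t - 1 : ℕ) : ℤ) := by omega
        rw [hte, zpow_natCast] at ht'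
        have hnat : p ^ (t - 1) * (p - 1) ≤ d := by
          have : ((p ^ (t - 1) * (p - 1) : ℕ) : ℚ) ≤ (d : ℚ) := by
            push_cast [Nat.cast_sub (by omega : 1 ≤ p)]
            exact_mod_cast ht'
          exact_mod_cast this
        calc p ^ j * (p - 1) ≤ p ^ (t - 1) * (p - 1) := by
              apply Nat.mul_le_mul_right
              exact Nat.pow_le_pow_right (by omega) (by omega)
          _ ≤ d := hnat
      have hkey := key1 p d t hp2 hdt (t - v) (by omega)
      have hvv : t - (t - v) = v := by omega
      rw [hvv] at hkey
      have hpvk : p ^ v ≤ k + 1 := Nat.le_of_dvd (by omega) pow_padicValNat_dvd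
      omega
    have hpow : ∀ m : ℕ, ((1 - f ^ p ^ t : Module.End ℤ_[p] M)) ^ m ∈ S (p ^ t * m) := by
      intro m
      induction m with
      | zero =>
        apply Submodule.subset_span
        exact ⟨0, 0, by simp, by simp⟩
      | succ m ih =>
        have e : p ^ t * (m + 1) = p ^ t * m + p ^ t := by ring
        rw [pow_succ, e]
        exact hmul _ _ _ ih _ hb
    -- Step 3 : conclude
    set N : ℕ := ⌈((p : ℚ) ^ t / (d : ℚ)) * (i : ℚ) - 1⌉.toNat with hN
    suffices h : ∀ g ∈ S (p ^ t * i), ∃ y : M, g x = (p : ℤ_[p]) ^ N • y by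
      exact h _ (hpow i)
    intro g hg
    induction hg using Submodule.span_induction with
    | mem g hgmem =>
      obtain ⟨c, k, hck, rfl⟩ := hgmem
      set q := k / d with hq
      set r := k % d with hr
      have hkdr : k = d * q + r := (Nat.div_add_mod k d).symm
      have hcqN : N ≤ c + q := by
        have hdQ : (0 : ℚ) < d := by exact_mod_cast hdpos
        rw [hN, Int.toNat_le, Int.ceil_le]
        push_cast
        rw [div_mul_eq_mul_div, sub_le_iff_le_add, div_le_iff₀ hdQ]
        have h1 : (p : ℚ) ^ t * i ≤ (d : ℚ) * c + k := by
          have h0 : ((p ^ t * i : ℕ) : ℚ) ≤ ((d * c + k : ℕ) : ℚ) := by exact_mod_cast hck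
          push_cast at h0
          linarith
        have h2 : (r : ℚ) ≤ (d : ℚ) - 1 := by
          have hr1 : r < d := Nat.mod_lt _ hdpos
          have hr2 : (r : ℚ) + 1 ≤ (d : ℚ) := by exact_mod_cast hr1
          linarith
        have h3 : (k : ℚ) = (d : ℚ) * q + r := by exact_mod_cast hkdr
        nlinarith
      -- g x = p^c • (a^k x), a^k = (a^d)^q * a^r
      have hak : a ^ k = ((p : ℤ_[p]) ^ q) • (g₀ ^ q * a ^ r) := by
        rw [hkdr, pow_add, pow_mul, hg₀, smul_pow]
        rw [smul_mul_assoc]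
      refine ⟨(p : ℤ_[p]) ^ (c + q - N) • ((g₀ ^ q * a ^ r) x), ?_⟩
      rw [LinearMap.smul_apply, hak, LinearMap.smul_apply]
      rw [smul_smul, smul_smul, ← pow_add, ← pow_add]
      congr 2
      omega
    | zero => exact ⟨0, by simp⟩
    | add g1 g2 hg1 hg2 ih1 ih2 =>
      obtain ⟨y1, hy1⟩ := ih1
      obtain ⟨y2, hy2⟩ := ih2
      exact ⟨y1 + y2, by rw [LinearMap.add_apply, hy1, hy2, smul_add]⟩
    | smul c g1 hg1 ih =>
      obtain ⟨y, hy⟩ := ih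
      exact ⟨c • y, by rw [LinearMap.smul_apply, hy, smul_comm]⟩
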